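/- arXiv:math/0306051 — 6 statements merged into one kernel-verified Lean document; each statement's English description precedes it below -/
import Mathlib

section
/- For all l ∈ ℕ and n ≥ 1, the product of the leading coefficients of the first n orthogonal polynomials at level l satisfies k^l_1 · k^l_2 ⋯ k^l_n = √(s_l / D_{l,l+n}). -/
open Polynomial Filter Finset

/-- The complementary quantity `d_{k,j} = (1 - |γ_{k,j}|²)^{1/2}`. -/
noncomputable def dd (γ : ℕ → ℕ → ℂ) (k j : ℕ) : ℝ :=
  Real.sqrt (1 - ‖γ k j‖ ^ 2)

/-- The pair `(φ_n(·,l), φ♯_n(·,l))` of Szegő-type orthogonal polynomials attached to the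
Schur parameters `γ` and the diagonal `s`, defined by the recurrences
`φ_n(X,l) = d_{l,n+l}⁻¹ (X φ_{n-1}(X,l+1) - γ_{l,n+l} φ♯_{n-1}(X,l))` and
`φ♯_n(X,l) = d_{l,n+l}⁻¹ (-conj(γ_{l,n+l}) X φ_{n-1}(X,l+1) + φ♯_{n-1}(X,l))`,
with `φ_0(X,l) = φ♯_0(X,l) = s_l^{-1/2}`. -/
noncomputable def phiPair (s : ℕ → ℝ) (γ : ℕ → ℕ → ℂ) : ℕ → ℕ → Polynomial ℂ × Polynomial ℂ
  | 0, l => (Polynomial.C (((Real.sqrt (s l))⁻¹ : ℝ) : ℂ),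
             Polynomial.C (((Real.sqrt (s l))⁻¹ : ℝ) : ℂ))
  | n + 1, l =>
      (Polynomial.C (((dd γ l (n + 1 + l))⁻¹ : ℝ) : ℂ) *
         (Polynomial.X * (phiPair s γ n (l + 1)).1 -
           Polynomial.C (γ l (n + 1 + l)) * (phiPair s γ n l).2),
       Polynomial.C (((dd γ l (n + 1 + l))⁻¹ : ℝ) : ℂ) *
         (-(Polynomial.C ((starRingEnd ℂ) (γ l (n + 1 + l))) * Polynomial.X *
             (phiPair s γ n (l + 1)).1) +
           (phiPair s γ n l).2))

/-- The orthogonal polynomial `φ_n(X,l)`. -/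
noncomputable def phi (s : ℕ → ℝ) (γ : ℕ → ℕ → ℂ) (n l : ℕ) : Polynomial ℂ :=
  (phiPair s γ n l).1

/-- The reversed polynomial `φ♯_n(X,l)`. -/
noncomputable def phiSharp (s : ℕ → ℝ) (γ : ℕ → ℕ → ℂ) (n l : ℕ) : Polynomial ℂ :=
  (phiPair s γ n l).2

/-- The determinant `D_{r,q} = (∏_{k=r}^q s_k) ∏_{r ≤ k < j ≤ q} d_{k,j}²` of the positive
definite kernel associated with the parameters `γ`. -/
noncomputable def Ddet (s : ℕ → ℝ) (γ : ℕ → ℕ → ℂ) (r q : ℕ) : ℝ :=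
  (∏ k ∈ Finset.Icc r q, s k) *
    ∏ k ∈ Finset.Icc r q, ∏ j ∈ Finset.Icc (k + 1) q, (dd γ k j) ^ 2

noncomputable def Kc (s : ℕ → ℝ) (γ : ℕ → ℕ → ℂ) (n l : ℕ) : ℝ :=
  (Real.sqrt (s (n + l)))⁻¹ * ∏ i ∈ Finset.range n, (dd γ (l + i) (n + l))⁻¹

lemma dd_pos (γ : ℕ → ℕ → ℂ) (hγ : ∀ k j, k < j → ‖γ k j‖ < 1) {k j : ℕ} (h : k < j) :
    0 < dd γ k j := by
  have h1 := hγ k j h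
  have h0 := norm_nonneg (γ k j)
  have h2 : ‖γ k j‖ ^ 2 < 1 := by nlinarith
  exact Real.sqrt_pos.mpr (by linarith)

lemma Kc_succ (s : ℕ → ℝ) (γ : ℕ → ℕ → ℂ) (n l : ℕ) :
    Kc s γ (n+1) l = (dd γ l (n+1+l))⁻¹ * Kc s γ n (l+1) := by
  unfold Kc
  rw [Finset.prod_range_succ']
  have h : ∏ i ∈ Finset.range n, (dd γ (l + (i+1)) (n+1+l))⁻¹
      = ∏ i ∈ Finset.range n, (dd γ (l+1+i) (n+(l+1)))⁻¹ :=
    Finset.prod_congr rfl fun i _ => by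
      rw [show l+(i+1) = l+1+i by omega, show n+1+l = n+(l+1) by omega]
  rw [h, Nat.add_zero, show n+(l+1) = n+1+l by omega]
  ring_nf

lemma Kc_pos (s : ℕ → ℝ) (γ : ℕ → ℕ → ℂ) (hs : ∀ l, 0 < s l)
    (hγ : ∀ k j, k < j → ‖γ k j‖ < 1) (n l : ℕ) : 0 < Kc s γ n l := by
  unfold Kc
  apply mul_pos (inv_pos.mpr (Real.sqrt_pos.mpr (hs _)))
  exact Finset.prod_pos fun i hi =>
    inv_pos.mpr (dd_pos γ hγ (by simp only [Finset.mem_range] at hi; omega))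

lemma phi_spec (s : ℕ → ℝ) (γ : ℕ → ℕ → ℂ) :
    ∀ n l, (phi s γ n l).natDegree ≤ n ∧ (phi s γ n l).coeff n = ((Kc s γ n l : ℝ) : ℂ)
      ∧ (phiSharp s γ n l).natDegree ≤ n := by
  intro n
  induction n with
  | zero =>
    intro l
    refine ⟨?_, ?_, ?_⟩
    · show (Polynomial.C (((Real.sqrt (s l))⁻¹ : ℝ) : ℂ)).natDegree ≤ 0
      simp
    · show (Polynomial.C (((Real.sqrt (s l))⁻¹ : ℝ) : ℂ)).coeff 0 = _
      rw [Polynomial.coeff_C_zero]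
      unfold Kc
      norm_num
    · show (Polynomial.C (((Real.sqrt (s l))⁻¹ : ℝ) : ℂ)).natDegree ≤ 0
      simp
  | succ n ih =>
    intro l
    obtain ⟨h1, h2, h3⟩ := ih (l+1)
    obtain ⟨h1', h2', h3'⟩ := ih l
    have hX : (Polynomial.X * phi s γ n (l+1)).natDegree ≤ n+1 := by
      refine le_trans (Polynomial.natDegree_mul_le) ?_
      simp only [Polynomial.natDegree_X]
      omega
    refine ⟨?_, ?_, ?_⟩
    · show (Polynomial.C _ * (Polynomial.X * (phiPair s γ n (l + 1)).1 -
        Polynomial.C (γ l (n + 1 + l)) * (phiPair s γ n l).2)).natDegree ≤ n + 1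
      refine le_trans (Polynomial.natDegree_mul_le) ?_
      simp only [Polynomial.natDegree_C, Nat.zero_add]
      refine le_trans (Polynomial.natDegree_sub_le _ _) ?_
      simp only [max_le_iff]
      refine ⟨hX, le_trans (Polynomial.natDegree_mul_le) ?_⟩
      simp only [Polynomial.natDegree_C, Nat.zero_add]
      exact le_trans h3' (by omega)
    · show (Polynomial.C _ * (Polynomial.X * (phiPair s γ n (l + 1)).1 -
        Polynomial.C (γ l (n + 1 + l)) * (phiPair s γ n l).2)).coeff (n+1) = _
      rw [Polynomial.coeff_C_mul, Polynomial.coeff_sub, Polynomial.coeff_X_mul,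
        Polynomial.coeff_C_mul,
        show (phiPair s γ n l).2 = phiSharp s γ n l from rfl,
        show (phiPair s γ n (l+1)).1 = phi s γ n (l+1) from rfl,
        Polynomial.coeff_eq_zero_of_natDegree_lt (lt_of_le_of_lt h3' (Nat.lt_succ_self n)),
        h2, Kc_succ]
      push_cast
      ring
    · show (Polynomial.C _ * (-(Polynomial.C _ * Polynomial.X * (phiPair s γ n (l + 1)).1) +
        (phiPair s γ n l).2)).natDegree ≤ n + 1
      refine le_trans (Polynomial.natDegree_mul_le) ?_
      simp only [Polynomial.natDegree_C, Nat.zero_add]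
      refine le_trans (Polynomial.natDegree_add_le _ _) ?_
      simp only [max_le_iff, Polynomial.natDegree_neg]
      constructor
      · have hCX : (Polynomial.C ((starRingEnd ℂ) (γ l (n+1+l))) * Polynomial.X).natDegree ≤ 1 :=
          le_trans Polynomial.natDegree_mul_le (by simp)
        refine le_trans (Polynomial.natDegree_mul_le) ?_
        have := show (phiPair s γ n (l+1)).1 = phi s γ n (l+1) from rfl
        rw [this]
        omega
      · exact le_trans h3' (by omega)

lemma phi_leadingCoeff (s : ℕ → ℝ) (γ : ℕ → ℕ → ℂ) (hs : ∀ l, 0 < s l)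
    (hγ : ∀ k j, k < j → ‖γ k j‖ < 1) (n l : ℕ) :
    (phi s γ n l).leadingCoeff = ((Kc s γ n l : ℝ) : ℂ) := by
  obtain ⟨h1, h2, -⟩ := phi_spec s γ n l
  have hne : (phi s γ n l).coeff n ≠ 0 := by
    rw [h2]
    exact_mod_cast (Kc_pos s γ hs hγ n l).ne'
  have hdeg : (phi s γ n l).natDegree = n :=
    le_antisymm h1 (Polynomial.le_natDegree_of_ne_zero hne)
  rw [Polynomial.leadingCoeff, hdeg, h2]

lemma Ddet_pos (s : ℕ → ℝ) (γ : ℕ → ℕ → ℂ) (hs : ∀ l, 0 < s l)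
    (hγ : ∀ k j, k < j → ‖γ k j‖ < 1) (r q : ℕ) : 0 < Ddet s γ r q := by
  unfold Ddet
  refine mul_pos (Finset.prod_pos fun k _ => hs k) ?_
  refine Finset.prod_pos fun k _ => Finset.prod_pos fun j hj => ?_
  exact pow_pos (dd_pos γ hγ (by simp only [Finset.mem_Icc] at hj; omega)) 2

lemma Ddet_succ (s : ℕ → ℝ) (γ : ℕ → ℕ → ℂ) (l n : ℕ) :
    Ddet s γ l (l + (n+1)) = Ddet s γ l (l+n) *
      (s (l+n+1) * ∏ k ∈ Finset.Icc l (l+n), (dd γ k (l+n+1))^2) := by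
  unfold Ddet
  rw [show l + (n+1) = (l+n)+1 by omega]
  rw [Finset.prod_Icc_succ_top (by omega : l ≤ l+n+1)]
  rw [Finset.prod_Icc_succ_top (by omega : l ≤ l+n+1)]
  rw [Finset.Icc_eq_empty (by omega : ¬ (l+n+1)+1 ≤ l+n+1), Finset.prod_empty]
  have : ∀ k ∈ Finset.Icc l (l+n),
      (∏ j ∈ Finset.Icc (k+1) (l+n+1), (dd γ k j)^2) =
      (∏ j ∈ Finset.Icc (k+1) (l+n), (dd γ k j)^2) * (dd γ k (l+n+1))^2 := by
    intro k hk
    simp only [Finset.mem_Icc] at hk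
    exact Finset.prod_Icc_succ_top (by omega) _
  rw [Finset.prod_congr rfl this, Finset.prod_mul_distrib]
  ring

lemma prod_Kc (s : ℕ → ℝ) (γ : ℕ → ℕ → ℂ) (hs : ∀ l, 0 < s l)
    (hγ : ∀ k j, k < j → ‖γ k j‖ < 1) (l : ℕ) :
    ∀ n, ∏ m ∈ Finset.Icc 1 n, Kc s γ m l = Real.sqrt (s l / Ddet s γ l (l+n)) := by
  intro n
  induction n with
  | zero =>
    rw [show (1:ℕ) = 0 + 1 by rfl, Finset.Icc_eq_empty (by omega), Finset.prod_empty]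
    unfold Ddet
    rw [Nat.add_zero, Finset.Icc_self, Finset.prod_singleton, Finset.prod_singleton,
      Finset.Icc_eq_empty (by omega : ¬ l+1 ≤ l), Finset.prod_empty, mul_one,
      div_self (hs l).ne', Real.sqrt_one]
  | succ n ih =>
    rw [Finset.prod_Icc_succ_top (by omega : 1 ≤ n+1), ih, Ddet_succ]
    set D := Ddet s γ l (l+n) with hD
    have hDpos : 0 < D := Ddet_pos s γ hs hγ l (l+n)
    set P := ∏ k ∈ Finset.Icc l (l+n), dd γ k (l+n+1) with hP
    have hddpos : ∀ k ∈ Finset.Icc l (l+n), 0 < dd γ k (l+n+1) := fun k hk =>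
      dd_pos γ hγ (by simp only [Finset.mem_Icc] at hk; omega)
    have hPpos : 0 < P := Finset.prod_pos hddpos
    have hsq : ∏ k ∈ Finset.Icc l (l+n), (dd γ k (l+n+1))^2 = P^2 := by
      rw [hP, ← Finset.prod_pow]
    rw [hsq]
    have : s l / (D * (s (l+n+1) * P^2)) = (s l / D) * (s (l+n+1) * P^2)⁻¹ := by
      field_simp
    rw [this, Real.sqrt_mul (div_nonneg (hs l).le hDpos.le), Real.sqrt_inv,
      Real.sqrt_mul (hs _).le, Real.sqrt_sq hPpos.le]
    congr 1
    rw [mul_inv]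
    unfold Kc
    congr 1
    · rw [show n + 1 + l = l + n + 1 by omega]
    · rw [hP, ← Finset.prod_inv_distrib,
        show Finset.Icc l (l+n) = Finset.Ico l (l+n+1) by rw [Finset.Ico_add_one_right_eq_Icc],
        Finset.prod_Ico_eq_prod_range, show l + n + 1 - l = n + 1 by omega]
      exact Finset.prod_congr rfl fun i _ => by rw [show n+1+l = l+n+1 by omega]

/-- For all `l ∈ ℕ` and `n ≥ 1`, the product of the leading coefficients of the first `n`
orthogonal polynomials at level `l` satisfies `k^l_1 ⋯ k^l_n = √(s_l / D_{l,l+n})`. -/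
theorem prod_leadingCoeff (s : ℕ → ℝ) (γ : ℕ → ℕ → ℂ)
    (hs : ∀ l, 0 < s l) (hγ : ∀ k j, k < j → ‖γ k j‖ < 1) (n l : ℕ) (hn : 1 ≤ n) :
    ∏ m ∈ Finset.Icc 1 n, (phi s γ m l).leadingCoeff =
      ((Real.sqrt (s l / Ddet s γ l (l + n)) : ℝ) : ℂ) := by
  rw [Finset.prod_congr rfl fun m _ => phi_leadingCoeff s γ hs hγ m l,
    ← Complex.ofReal_prod, prod_Kc s γ hs hγ l n]
end

section
/- Assume the Szegő class condition: for every l ∈ ℕ, the partial products ∏_{p=1}^{m} d_{l,l+p} converge, as m → ∞, to a positive limit. Then for every k, l ∈ ℕ, the series ∑_{n≥0} |φ_n^{(k)}(0,l)|² converges. -/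
open Polynomial Filter Finset

lemma szego_facts (γ : ℕ → ℕ → ℂ) (hγ : ∀ k j, k < j → ‖γ k j‖ < 1)
    (hSzego : ∀ l, ∃ g : ℝ, 0 < g ∧
      Filter.Tendsto (fun m => ∏ p ∈ Finset.Icc 1 m, dd γ l (l + p)) Filter.atTop (nhds g))
    (l : ℕ) :
    ∃ g : ℝ, 0 < g ∧ (∀ n, g ≤ dd γ l (l + (n + 1))) ∧
      (∀ m, g ≤ ∏ p ∈ Finset.Icc 1 m, dd γ l (l + p)) ∧
      (∀ m, (∏ p ∈ Finset.Icc 1 m, dd γ l (l + p)) ≤ 1) ∧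
      Summable (fun p => ‖γ l (l + (p + 1))‖ ^ 2) := by
  obtain ⟨g, hg, htend⟩ := hSzego l
  set P : ℕ → ℝ := fun m => ∏ p ∈ Finset.Icc 1 m, dd γ l (l + p) with hP
  have hγp : ∀ p, 1 ≤ p → ‖γ l (l + p)‖ < 1 := fun p hp => hγ l _ (by omega)
  have hdpos : ∀ p, 1 ≤ p → 0 < dd γ l (l + p) := by
    intro p hp
    have h1 := hγp p hp
    have : 0 < 1 - ‖γ l (l + p)‖ ^ 2 := by nlinarith [norm_nonneg (γ l (l + p))]
    exact Real.sqrt_pos.mpr this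
  have hdle : ∀ p, dd γ l (l + p) ≤ 1 := by
    intro p
    have : (1 : ℝ) - ‖γ l (l + p)‖ ^ 2 ≤ 1 := by nlinarith [sq_nonneg (‖γ l (l + p)‖)]
    exact Real.sqrt_le_one.mpr this
  have hPsucc : ∀ m, P (m + 1) = P m * dd γ l (l + (m + 1)) := by
    intro m
    exact Finset.prod_Icc_succ_top (by omega) _
  have hPpos : ∀ m, 0 < P m := by
    intro m
    apply Finset.prod_pos
    intro p hp
    exact hdpos p (Finset.mem_Icc.mp hp).1
  have hPanti : Antitone P := by
    apply antitone_nat_of_succ_le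
    intro m
    rw [hPsucc m]
    calc P m * dd γ l (l + (m + 1)) ≤ P m * 1 :=
          mul_le_mul_of_nonneg_left (hdle _) (hPpos m).le
      _ = P m := mul_one _
  have hgP : ∀ m, g ≤ P m := fun m => hPanti.le_of_tendsto htend m
  have hPle1 : ∀ m, P m ≤ 1 := by
    intro m
    apply Finset.prod_le_one
    · intro p hp; exact (hdpos p (Finset.mem_Icc.mp hp).1).le
    · intro p _; exact hdle p
  refine ⟨g, hg, ?_, hgP, hPle1, ?_⟩
  · intro n
    calc g ≤ P (n + 1) := hgP _
      _ = P n * dd γ l (l + (n + 1)) := hPsucc n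
      _ ≤ 1 * dd γ l (l + (n + 1)) :=
          mul_le_mul_of_nonneg_right (hPle1 n) (hdpos _ (by omega)).le
      _ = _ := one_mul _
  · -- summability of ∑ ‖γ‖²
    apply summable_of_sum_range_le (c := -(2 * Real.log g))
    · intro n; positivity
    · intro m
      have key : ∀ m, ∑ p ∈ Finset.range m, ‖γ l (l + (p + 1))‖ ^ 2 ≤ -(2 * Real.log (P m)) := by
        intro m
        induction m with
        | zero => simp [hP]
        | succ m ih =>
          rw [Finset.sum_range_succ, hPsucc m,
            Real.log_mul (hPpos m).ne' (hdpos _ (by omega)).ne']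
          have hlog : ‖γ l (l + (m + 1))‖ ^ 2 ≤ -(2 * Real.log (dd γ l (l + (m + 1)))) := by
            have h1 : ‖γ l (l + (m + 1))‖ < 1 := hγp _ (by omega)
            have h2 : 0 < 1 - ‖γ l (l + (m + 1))‖ ^ 2 := by
              nlinarith [norm_nonneg (γ l (l + (m + 1)))]
            have h3 : dd γ l (l + (m + 1)) ^ 2 = 1 - ‖γ l (l + (m + 1))‖ ^ 2 :=
              Real.sq_sqrt h2.le
            have h4 : Real.log (dd γ l (l + (m + 1)) ^ 2) ≤ -‖γ l (l + (m + 1))‖ ^ 2 := by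
              calc Real.log (dd γ l (l + (m + 1)) ^ 2) ≤ dd γ l (l + (m + 1)) ^ 2 - 1 :=
                    Real.log_le_sub_one_of_pos (by rw [h3]; exact h2)
                _ = -‖γ l (l + (m + 1))‖ ^ 2 := by rw [h3]; ring
            rw [Real.log_pow] at h4
            push_cast at h4
            linarith
          linarith
      calc ∑ p ∈ Finset.range m, ‖γ l (l + (p + 1))‖ ^ 2 ≤ -(2 * Real.log (P m)) := key m
        _ ≤ -(2 * Real.log g) := by
            have := Real.log_le_log hg (hgP m)
            linarith

lemma phi_succ (s : ℕ → ℝ) (γ : ℕ → ℕ → ℂ) (n l : ℕ) :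
    phi s γ (n + 1) l = Polynomial.C (((dd γ l (n + 1 + l))⁻¹ : ℝ) : ℂ) *
      (Polynomial.X * phi s γ n (l + 1) -
        Polynomial.C (γ l (n + 1 + l)) * phiSharp s γ n l) := rfl

lemma phiSharp_succ (s : ℕ → ℝ) (γ : ℕ → ℕ → ℂ) (n l : ℕ) :
    phiSharp s γ (n + 1) l = Polynomial.C (((dd γ l (n + 1 + l))⁻¹ : ℝ) : ℂ) *
      (-(Polynomial.C ((starRingEnd ℂ) (γ l (n + 1 + l))) * Polynomial.X *
          phi s γ n (l + 1)) + phiSharp s γ n l) := rfl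


/-- Auxiliary: norm of coefficient of `X * φ_n(·, l+1)`. -/
noncomputable def aco (s : ℕ → ℝ) (γ : ℕ → ℕ → ℂ) (k l n : ℕ) : ℝ :=
  ‖(Polynomial.X * phi s γ n (l + 1)).coeff k‖

/-- Auxiliary: norm of coefficient of `φ♯_n(·, l)`. -/
noncomputable def Bco (s : ℕ → ℝ) (γ : ℕ → ℕ → ℂ) (k l n : ℕ) : ℝ :=
  ‖(phiSharp s γ n l).coeff k‖

lemma aco_nonneg (s : ℕ → ℝ) (γ : ℕ → ℕ → ℂ) (k l n : ℕ) : 0 ≤ aco s γ k l n :=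
  norm_nonneg _

lemma Bco_nonneg (s : ℕ → ℝ) (γ : ℕ → ℕ → ℂ) (k l n : ℕ) : 0 ≤ Bco s γ k l n :=
  norm_nonneg _

lemma step (s : ℕ → ℝ) (γ : ℕ → ℕ → ℂ)
    (hγ : ∀ k j, k < j → ‖γ k j‖ < 1)
    (hSzego : ∀ l, ∃ g : ℝ, 0 < g ∧
      Filter.Tendsto (fun m => ∏ p ∈ Finset.Icc 1 m, dd γ l (l + p)) Filter.atTop (nhds g))
    (k : ℕ)
    (H : ∀ l, Summable (fun n => aco s γ k l n ^ 2)) (l : ℕ) :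
    Summable (fun n => ‖(phi s γ n l).coeff k‖ ^ 2) ∧
      ∃ M, ∀ n, Bco s γ k l n ≤ M := by
  obtain ⟨g, hg, hgd, hgP, hPle1, hcsum⟩ := szego_facts γ hγ hSzego l
  have ha2 : Summable (fun n => aco s γ k l n ^ 2) := H l
  have hc2 : Summable (fun p => ‖γ l (l + (p + 1))‖ ^ 2) := hcsum
  have hdpos : ∀ n, 0 < dd γ l (l + (n + 1)) := fun n => lt_of_lt_of_le hg (hgd n)
  have hdinv : ∀ n, (dd γ l (l + (n + 1)))⁻¹ ≤ g⁻¹ := fun n =>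
    inv_anti₀ hg (hgd n)
  have hnormd : ∀ n, ‖((((dd γ l (l + (n + 1)))⁻¹ : ℝ)) : ℂ)‖ = (dd γ l (l + (n + 1)))⁻¹ := by
    intro n
    rw [Complex.norm_real, Real.norm_eq_abs, abs_of_pos (inv_pos.mpr (hdpos n))]
  set P : ℕ → ℝ := fun m => ∏ p ∈ Finset.Icc 1 m, dd γ l (l + p) with hP_def
  have hPsucc : ∀ m, P (m + 1) = P m * dd γ l (l + (m + 1)) := fun m =>
    Finset.prod_Icc_succ_top (by omega) _
  have hPpos : ∀ m, 0 < P m := by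
    intro m
    induction m with
    | zero => simp [hP_def]
    | succ m ih => rw [hPsucc m]; exact mul_pos ih (hdpos m)
  -- recursion bound for B
  have hBrec : ∀ n, Bco s γ k l (n + 1) ≤
      (dd γ l (l + (n + 1)))⁻¹ * (‖γ l (l + (n + 1))‖ * aco s γ k l n + Bco s γ k l n) := by
    intro n
    have e : n + 1 + l = l + (n + 1) := by omega
    have hco : (phiSharp s γ (n + 1) l).coeff k =
        ((((dd γ l (l + (n + 1)))⁻¹ : ℝ) : ℂ)) *
          (-((starRingEnd ℂ) (γ l (l + (n + 1))) * (Polynomial.X * phi s γ n (l + 1)).coeff k) +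
            (phiSharp s γ n l).coeff k) := by
      rw [phiSharp_succ, e]
      simp [Polynomial.coeff_C_mul, Polynomial.coeff_add, Polynomial.coeff_neg, mul_assoc]
    have h2 : ‖-((starRingEnd ℂ) (γ l (l + (n + 1))) *
          (Polynomial.X * phi s γ n (l + 1)).coeff k) + (phiSharp s γ n l).coeff k‖ ≤
        ‖γ l (l + (n + 1))‖ * aco s γ k l n + Bco s γ k l n := by
      refine le_trans (norm_add_le _ _) ?_
      rw [norm_neg, norm_mul, RCLike.norm_conj]
      exact le_refl _
    show ‖(phiSharp s γ (n + 1) l).coeff k‖ ≤ _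
    rw [hco, norm_mul, hnormd n]
    exact mul_le_mul_of_nonneg_left h2 (inv_pos.mpr (hdpos n)).le
  -- damped bound for B
  have hQ : ∀ n, P n * Bco s γ k l n ≤
      Bco s γ k l 0 + ∑ p ∈ Finset.range n, ‖γ l (l + (p + 1))‖ * aco s γ k l p := by
    intro n
    induction n with
    | zero => simp [hP_def]
    | succ n ih =>
      rw [hPsucc n, Finset.sum_range_succ]
      have step1 : P n * dd γ l (l + (n + 1)) * Bco s γ k l (n + 1) ≤
          P n * dd γ l (l + (n + 1)) * ((dd γ l (l + (n + 1)))⁻¹ *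
            (‖γ l (l + (n + 1))‖ * aco s γ k l n + Bco s γ k l n)) :=
        mul_le_mul_of_nonneg_left (hBrec n) (mul_nonneg (hPpos n).le (hdpos n).le)
      have step2 : P n * dd γ l (l + (n + 1)) * ((dd γ l (l + (n + 1)))⁻¹ *
            (‖γ l (l + (n + 1))‖ * aco s γ k l n + Bco s γ k l n)) =
          P n * (‖γ l (l + (n + 1))‖ * aco s γ k l n) + P n * Bco s γ k l n := by
        rw [mul_assoc, ← mul_assoc (dd γ l (l + (n + 1))), mul_inv_cancel₀ (hdpos n).ne',
          one_mul, mul_add]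
      have step3 : P n * (‖γ l (l + (n + 1))‖ * aco s γ k l n) ≤
          ‖γ l (l + (n + 1))‖ * aco s γ k l n := by
        have h1 : P n * (‖γ l (l + (n + 1))‖ * aco s γ k l n) ≤
            1 * (‖γ l (l + (n + 1))‖ * aco s γ k l n) :=
          mul_le_mul_of_nonneg_right (hPle1 n)
            (mul_nonneg (norm_nonneg _) (aco_nonneg s γ k l n))
        linarith
      linarith
  -- partial sums of c*a bounded
  have hsum_ca : ∀ n, ∑ p ∈ Finset.range n, ‖γ l (l + (p + 1))‖ * aco s γ k l p ≤
      (∑' p, ‖γ l (l + (p + 1))‖ ^ 2) / 2 + (∑' p, aco s γ k l p ^ 2) / 2 := by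
    intro n
    have h1 : ∀ p, ‖γ l (l + (p + 1))‖ * aco s γ k l p ≤
        ‖γ l (l + (p + 1))‖ ^ 2 / 2 + aco s γ k l p ^ 2 / 2 := by
      intro p
      nlinarith [sq_nonneg (‖γ l (l + (p + 1))‖ - aco s γ k l p), norm_nonneg (γ l (l + (p + 1))),
        aco_nonneg s γ k l p]
    have h2 : ∑ p ∈ Finset.range n, ‖γ l (l + (p + 1))‖ ^ 2 ≤ ∑' p, ‖γ l (l + (p + 1))‖ ^ 2 :=
      Summable.sum_le_tsum _ (fun p _ => by positivity) hc2
    have h3 : ∑ p ∈ Finset.range n, aco s γ k l p ^ 2 ≤ ∑' p, aco s γ k l p ^ 2 :=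
      Summable.sum_le_tsum _ (fun p _ => by positivity) ha2
    calc ∑ p ∈ Finset.range n, ‖γ l (l + (p + 1))‖ * aco s γ k l p
        ≤ ∑ p ∈ Finset.range n, (‖γ l (l + (p + 1))‖ ^ 2 / 2 + aco s γ k l p ^ 2 / 2) :=
          Finset.sum_le_sum (fun p _ => h1 p)
      _ = (∑ p ∈ Finset.range n, ‖γ l (l + (p + 1))‖ ^ 2) / 2 +
          (∑ p ∈ Finset.range n, aco s γ k l p ^ 2) / 2 := by
          rw [Finset.sum_add_distrib, Finset.sum_div, Finset.sum_div]
      _ ≤ _ := by linarith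
  set T : ℝ := (∑' p, ‖γ l (l + (p + 1))‖ ^ 2) / 2 + (∑' p, aco s γ k l p ^ 2) / 2 with hT_def
  set M : ℝ := (Bco s γ k l 0 + T) / g with hM_def
  have hM : ∀ n, Bco s γ k l n ≤ M := by
    intro n
    have h1 : g * Bco s γ k l n ≤ P n * Bco s γ k l n :=
      mul_le_mul_of_nonneg_right (hgP n) (Bco_nonneg s γ k l n)
    have h2 : P n * Bco s γ k l n ≤ Bco s γ k l 0 + T :=
      le_trans (hQ n) (by linarith [hsum_ca n])
    rw [hM_def, le_div_iff₀ hg]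
    linarith
  have hM0 : 0 ≤ M := le_trans (Bco_nonneg s γ k l 0) (hM 0)
  refine ⟨?_, M, hM⟩
  -- recursion bound for A
  have hArec : ∀ n, ‖(phi s γ (n + 1) l).coeff k‖ ≤
      g⁻¹ * (aco s γ k l n + ‖γ l (l + (n + 1))‖ * M) := by
    intro n
    have e : n + 1 + l = l + (n + 1) := by omega
    have hco : (phi s γ (n + 1) l).coeff k =
        ((((dd γ l (l + (n + 1)))⁻¹ : ℝ) : ℂ)) *
          ((Polynomial.X * phi s γ n (l + 1)).coeff k -
            γ l (l + (n + 1)) * (phiSharp s γ n l).coeff k) := by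
      rw [phi_succ, e]
      simp [Polynomial.coeff_C_mul, Polynomial.coeff_sub]
    have h2 : ‖(Polynomial.X * phi s γ n (l + 1)).coeff k -
        γ l (l + (n + 1)) * (phiSharp s γ n l).coeff k‖ ≤
        aco s γ k l n + ‖γ l (l + (n + 1))‖ * M := by
      refine le_trans (norm_sub_le _ _) ?_
      rw [norm_mul]
      have h3 : ‖γ l (l + (n + 1))‖ * ‖(phiSharp s γ n l).coeff k‖ ≤
          ‖γ l (l + (n + 1))‖ * M :=
        mul_le_mul_of_nonneg_left (hM n) (norm_nonneg _)
      exact add_le_add (le_refl _) h3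
    rw [hco, norm_mul, hnormd n]
    exact mul_le_mul (hdinv n) h2 (norm_nonneg _)
      (by positivity)
  -- summability
  have hmaj : Summable (fun n => g⁻¹ ^ 2 * 2 *
      (aco s γ k l n ^ 2 + M ^ 2 * ‖γ l (l + (n + 1))‖ ^ 2)) := by
    apply Summable.mul_left
    exact ha2.add (hc2.mul_left (M ^ 2))
  have hshift : Summable (fun n => ‖(phi s γ (n + 1) l).coeff k‖ ^ 2) := by
    apply Summable.of_nonneg_of_le (fun n => by positivity) _ hmaj
    intro n
    have h1 := hArec n
    have h2 : (0:ℝ) ≤ ‖(phi s γ (n + 1) l).coeff k‖ := norm_nonneg _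
    have h3 : (0:ℝ) ≤ g⁻¹ := by positivity
    nlinarith [sq_nonneg (aco s γ k l n - ‖γ l (l + (n + 1))‖ * M),
      aco_nonneg s γ k l n, norm_nonneg (γ l (l + (n + 1))), hM0,
      mul_nonneg (norm_nonneg (γ l (l + (n + 1)))) hM0]
  exact (summable_nat_add_iff 1).mp hshift


lemma coeff_summable (s : ℕ → ℝ) (γ : ℕ → ℕ → ℂ)
    (hγ : ∀ k j, k < j → ‖γ k j‖ < 1)
    (hSzego : ∀ l, ∃ g : ℝ, 0 < g ∧
      Filter.Tendsto (fun m => ∏ p ∈ Finset.Icc 1 m, dd γ l (l + p)) Filter.atTop (nhds g)) :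
    ∀ k l, Summable (fun n => ‖(phi s γ n l).coeff k‖ ^ 2) := by
  intro k
  induction k with
  | zero =>
    intro l
    refine (step s γ hγ hSzego 0 (fun l' => ?_) l).1
    have h : (fun n => aco s γ 0 l' n ^ 2) = fun _ => (0 : ℝ) := by
      funext n
      unfold aco
      simp [Polynomial.mul_coeff_zero]
    rw [h]
    exact summable_zero
  | succ k ih =>
    intro l
    refine (step s γ hγ hSzego (k + 1) (fun l' => ?_) l).1
    have h : (fun n => aco s γ (k + 1) l' n ^ 2) =
        fun n => ‖(phi s γ n (l' + 1)).coeff k‖ ^ 2 := by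
      funext n
      unfold aco
      rw [Polynomial.coeff_X_mul]
    rw [h]
    exact ih (l' + 1)

/-- Under the Szegő class condition (for every `l`, the partial products `∏_{p=1}^m d_{l,l+p}`
converge to a positive limit), the series `∑_{n≥0} |φ_n^{(k)}(0,l)|²` converges for every
`k, l ∈ ℕ`. -/
theorem summable_sq_phi_derivative (s : ℕ → ℝ) (γ : ℕ → ℕ → ℂ)
    (hs : ∀ l, 0 < s l) (hγ : ∀ k j, k < j → ‖γ k j‖ < 1)
    (hSzego : ∀ l, ∃ g : ℝ, 0 < g ∧
      Filter.Tendsto (fun m => ∏ p ∈ Finset.Icc 1 m, dd γ l (l + p)) Filter.atTop (nhds g))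
    (k l : ℕ) :
    Summable (fun n => ‖(Polynomial.derivative^[k] (phi s γ n l)).eval 0‖ ^ 2) := by
  have hsum := coeff_summable s γ hγ hSzego k l
  have hfun : (fun n => ‖(Polynomial.derivative^[k] (phi s γ n l)).eval 0‖ ^ 2) =
      fun n => ((k.factorial : ℝ)) ^ 2 * ‖(phi s γ n l).coeff k‖ ^ 2 := by
    funext n
    rw [← Polynomial.coeff_zero_eq_eval_zero, Polynomial.coeff_iterate_derivative]
    simp only [zero_add, Nat.descFactorial_self, nsmul_eq_mul]
    rw [norm_mul, mul_pow]
    norm_num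
  rw [hfun]
  exact hsum.mul_left _
end

section
/- Theorem 3.4, formula (3.15): For all 0 ≤ r < q, the ratio of consecutive determinants satisfies D_{r,q} / D_{r+1,q} = s_r · ∏_{j=1}^{q-r} d_{r,r+j}² = 1 / |φ♯_{q-r}(0,r)|². -/
open Polynomial Filter Finset

lemma phiSharp_eval_zero (s : ℕ → ℝ) (γ : ℕ → ℕ → ℂ) (n l : ℕ) :
    (phiSharp s γ n l).eval 0 =
      (((∏ i ∈ Finset.Icc 1 n, (dd γ l (i + l))⁻¹) * (Real.sqrt (s l))⁻¹ : ℝ) : ℂ) := by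
  induction n with
  | zero => simp [phiSharp, phiPair]
  | succ n ih =>
      have : (phiSharp s γ (n + 1) l).eval 0 =
          (((dd γ l (n + 1 + l))⁻¹ : ℝ) : ℂ) * (phiSharp s γ n l).eval 0 := by
        simp [phiSharp, phiPair]
      rw [this, ih, Finset.prod_Icc_succ_top (Nat.one_le_iff_ne_zero.mpr (Nat.succ_ne_zero n))]
      push_cast
      ring

lemma Ddet_step (s : ℕ → ℝ) (γ : ℕ → ℕ → ℂ) {r q : ℕ} (hrq : r < q) :
    Ddet s γ r q = (s r * ∏ j ∈ Finset.Icc (r + 1) q, (dd γ r j) ^ 2) * Ddet s γ (r + 1) q := by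
  have hins : Finset.Icc r q = insert r (Finset.Icc (r + 1) q) := by
    ext x; simp only [Finset.mem_Icc, Finset.mem_insert]; omega
  have hnot : r ∉ Finset.Icc (r + 1) q := by simp
  rw [Ddet, Ddet, hins, Finset.prod_insert hnot, Finset.prod_insert hnot]
  ring

/-- Theorem 3.4, formula (3.15): for all `0 ≤ r < q`,
`D_{r,q} / D_{r+1,q} = s_r ∏_{j=1}^{q-r} d_{r,r+j}² = 1 / |φ♯_{q-r}(0,r)|²`. -/
theorem det_ratio_formula (s : ℕ → ℝ) (γ : ℕ → ℕ → ℂ)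
    (hs : ∀ l, 0 < s l) (hγ : ∀ k j, k < j → ‖γ k j‖ < 1) (r q : ℕ) (hrq : r < q) :
    Ddet s γ r q / Ddet s γ (r + 1) q =
        s r * ∏ j ∈ Finset.Icc 1 (q - r), (dd γ r (r + j)) ^ 2 ∧
      Ddet s γ r q / Ddet s γ (r + 1) q =
        1 / ‖(phiSharp s γ (q - r) r).eval 0‖ ^ 2 := by
  have hne : Ddet s γ (r + 1) q ≠ 0 := (Ddet_pos s γ hs hγ (r + 1) q).ne'
  have hratio : Ddet s γ r q / Ddet s γ (r + 1) q =
      s r * ∏ j ∈ Finset.Icc (r + 1) q, (dd γ r j) ^ 2 := by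
    rw [Ddet_step s γ hrq, mul_div_assoc, div_self hne, mul_one]
  have hreindex : ∏ j ∈ Finset.Icc 1 (q - r), (dd γ r (r + j)) ^ 2 =
      ∏ j ∈ Finset.Icc (r + 1) q, (dd γ r j) ^ 2 := by
    apply Finset.prod_nbij (fun j => r + j)
    · intro j hj; simp only [Finset.mem_Icc] at *; omega
    · intro a ha b hb hab
      have : r + a = r + b := hab
      omega
    · intro j hj
      simp only [Finset.mem_Icc, Finset.coe_Icc, Set.mem_image, Set.mem_Icc] at *
      exact ⟨j - r, by omega, by omega⟩
    · intro j hj; rfl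
  constructor
  · rw [hratio, hreindex]
  · rw [hratio, phiSharp_eval_zero]
    have hsr : 0 < Real.sqrt (s r) := Real.sqrt_pos.mpr (hs r)
    have hdpos : ∀ i ∈ Finset.Icc 1 (q - r), 0 < dd γ r (i + r) := by
      intro i hi
      have : r < i + r := by have := (Finset.mem_Icc.mp hi).1; omega
      exact dd_pos γ hγ this
    have hppos : 0 < ∏ i ∈ Finset.Icc 1 (q - r), (dd γ r (i + r))⁻¹ :=
      Finset.prod_pos fun i hi => inv_pos.mpr (hdpos i hi)
    rw [Complex.norm_real, Real.norm_eq_abs,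
      abs_of_pos (mul_pos hppos (inv_pos.mpr hsr))]
    rw [mul_pow]
    have h1 : (Real.sqrt (s r))⁻¹ ^ 2 = (s r)⁻¹ := by
      rw [inv_pow, Real.sq_sqrt (hs r).le]
    have h2 : (∏ i ∈ Finset.Icc 1 (q - r), (dd γ r (i + r))⁻¹) ^ 2 =
        (∏ j ∈ Finset.Icc (r + 1) q, (dd γ r j) ^ 2)⁻¹ := by
      rw [← Finset.prod_pow, ← hreindex, ← Finset.prod_inv_distrib]
      apply Finset.prod_congr rfl
      intro i _
      rw [Nat.add_comm r i, inv_pow]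
    rw [h1, h2]
    have hP : (0:ℝ) < ∏ j ∈ Finset.Icc (r + 1) q, (dd γ r j) ^ 2 := by
      apply Finset.prod_pos
      intro j hj
      have : r < j := by have := (Finset.mem_Icc.mp hj).1; omega
      exact pow_pos (dd_pos γ hγ this) 2
    field_simp
end

section
/- Assume the Szegő class condition: for every l ∈ ℕ, the partial products ∏_{p=1}^{m} d_{l,l+p} converge, as m → ∞, to a positive limit; set g_l = s_l · ∏_{j=1}^{∞} d_{l,l+j}². Then for every n ∈ ℕ, (∏_{l=0}^{n} g_l) / D_{0,n} = ∏_{k=0}^{n} ∏_{j=n+1}^{∞} d_{k,j}², where each inner infinite product converges to a positive limit. -/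
open Polynomial Filter Finset

/-- Under the Szegő class condition, with `G l` the (positive) limit of the partial products
`∏_{p=1}^m d_{l,l+p}` and `g_l = s_l (G l)² = s_l ∏_{j=1}^∞ d_{l,l+j}²`, for every `n ∈ ℕ`
one has `(∏_{l=0}^n g_l) / D_{0,n} = ∏_{k=0}^n ∏_{j=n+1}^∞ d_{k,j}²`, where each inner
infinite product converges to a positive limit. -/
theorem prod_g_div_det (s : ℕ → ℝ) (γ : ℕ → ℕ → ℂ)
    (hs : ∀ l, 0 < s l) (hγ : ∀ k j, k < j → ‖γ k j‖ < 1) (G : ℕ → ℝ)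
    (hGpos : ∀ l, 0 < G l)
    (hG : ∀ l, Filter.Tendsto (fun m => ∏ p ∈ Finset.Icc 1 m, dd γ l (l + p))
      Filter.atTop (nhds (G l))) (n : ℕ) :
    ∃ P : ℕ → ℝ,
      (∀ k ≤ n, 0 < P k ∧
        Filter.Tendsto (fun m => ∏ j ∈ Finset.Icc (n + 1) m, (dd γ k j) ^ 2)
          Filter.atTop (nhds (P k))) ∧
      (∏ l ∈ Finset.range (n + 1), s l * (G l) ^ 2) / Ddet s γ 0 n =
        ∏ k ∈ Finset.range (n + 1), P k := by
  have hd : ∀ k j, k < j → 0 < dd γ k j := by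
    intro k j hkj
    have h := hγ k j hkj
    have h0 := norm_nonneg (γ k j)
    exact Real.sqrt_pos.mpr (by nlinarith)
  set C : ℕ → ℝ := fun k => ∏ j ∈ Finset.Icc (k + 1) n, (dd γ k j) ^ 2 with hCdef
  have hCpos : ∀ k, 0 < C k := by
    intro k
    apply Finset.prod_pos
    intro j hj
    exact pow_pos (hd k j (by have := (Finset.mem_Icc.mp hj).1; omega)) 2
  refine ⟨fun k => G k ^ 2 / C k, ?_, ?_⟩
  · intro k hk
    refine ⟨div_pos (pow_pos (hGpos k) 2) (hCpos k), ?_⟩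
    have key : ∀ m, n ≤ m →
        ∏ j ∈ Finset.Icc (n + 1) m, (dd γ k j) ^ 2 =
          (∏ p ∈ Finset.Icc 1 (m - k), dd γ k (k + p)) ^ 2 / C k := by
      intro m hm
      have hsplit : (∏ j ∈ Finset.Icc (k + 1) n, (dd γ k j) ^ 2) *
          ∏ j ∈ Finset.Icc (n + 1) m, (dd γ k j) ^ 2 =
          ∏ j ∈ Finset.Icc (k + 1) m, (dd γ k j) ^ 2 := by
        rw [Finset.Icc_add_one_left_eq_Ioc, Finset.Icc_add_one_left_eq_Ioc, Finset.Icc_add_one_left_eq_Ioc]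
        exact Finset.prod_Ioc_consecutive _ hk hm
      have hre : ∏ j ∈ Finset.Icc (k + 1) m, (dd γ k j) ^ 2 =
          (∏ p ∈ Finset.Icc 1 (m - k), dd γ k (k + p)) ^ 2 := by
        rw [← Finset.prod_pow]
        have h1 : Finset.Icc (k + 1) m = Finset.Ico (k + 1) (m + 1) := by
          rw [Finset.Ico_add_one_right_eq_Icc]
        have h2 : Finset.Icc 1 (m - k) = Finset.Ico 1 (m - k + 1) := by
          rw [Finset.Ico_add_one_right_eq_Icc]
        rw [h1, h2, Finset.prod_Ico_eq_prod_range, Finset.prod_Ico_eq_prod_range]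
        have : m + 1 - (k + 1) = m - k + 1 - 1 := by omega
        rw [this]
        exact Finset.prod_congr rfl fun i _ => by rw [show k + (1 + i) = k + 1 + i by omega]
      rw [← hre, ← hsplit, mul_comm, mul_div_assoc, div_self (ne_of_gt (hCpos k)), mul_one]
    have htend : Filter.Tendsto
        (fun m => (∏ p ∈ Finset.Icc 1 (m - k), dd γ k (k + p)) ^ 2 / C k)
        Filter.atTop (nhds (G k ^ 2 / C k)) := by
      exact (((hG k).comp (Filter.tendsto_sub_atTop_nat k)).pow 2).div_const _
    exact htend.congr' (Filter.eventually_atTop.mpr ⟨n, fun m hm => (key m hm).symm⟩)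
  · have hIcc : Finset.Icc 0 n = Finset.range (n + 1) := by
      ext x; simp [Nat.lt_succ_iff]
    rw [Ddet, hIcc, Finset.prod_mul_distrib, Finset.prod_div_distrib]
    rw [mul_div_mul_left]
    exact ne_of_gt (Finset.prod_pos fun l _ => hs l)
end

section
/- Theorem 3.4, formula (3.17) (analogue of the strong Szegő limit theorem): Assume the Szegő class condition: for every l ∈ ℕ, the partial products ∏_{p=1}^{m} d_{l,l+p} converge, as m → ∞, to a positive limit; set g_l = s_l · ∏_{j=1}^{∞} d_{l,l+j}². Assume moreover that the quantities L_n = ∏_{0 ≤ k ≤ n < j} d_{k,j}² converge as n → ∞ to a limit L > 0. Then lim_{n→∞} D_{0,n} / (∏_{l=0}^{n} g_l) = 1/L. -/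
open Polynomial Filter Finset

/-- Theorem 3.4, formula (3.17) (analogue of the strong Szegő limit theorem): under the Szegő
class condition, with `G l` the (positive) limit of the partial products `∏_{p=1}^m d_{l,l+p}`
and `g_l = s_l (G l)²`, and assuming the quantities
`L_n = ∏_{0 ≤ k ≤ n < j} d_{k,j}² = ∏_{k=0}^n Lfun n k` (where `Lfun n k` is the limit of the
inner partial products `∏_{j=n+1}^m d_{k,j}²`) converge to a limit `L > 0`, one has
`lim_{n→∞} D_{0,n} / (∏_{l=0}^n g_l) = 1/L`. -/
theorem strong_szego_limit (s : ℕ → ℝ) (γ : ℕ → ℕ → ℂ)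
    (hs : ∀ l, 0 < s l) (hγ : ∀ k j, k < j → ‖γ k j‖ < 1) (G : ℕ → ℝ)
    (hGpos : ∀ l, 0 < G l)
    (hG : ∀ l, Filter.Tendsto (fun m => ∏ p ∈ Finset.Icc 1 m, dd γ l (l + p))
      Filter.atTop (nhds (G l)))
    (Lfun : ℕ → ℕ → ℝ)
    (hLfun : ∀ n, ∀ k ≤ n,
      Filter.Tendsto (fun m => ∏ j ∈ Finset.Icc (n + 1) m, (dd γ k j) ^ 2)
        Filter.atTop (nhds (Lfun n k)))
    (L : ℝ) (hLpos : 0 < L)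
    (hL : Filter.Tendsto (fun n => ∏ k ∈ Finset.range (n + 1), Lfun n k)
      Filter.atTop (nhds L)) :
    Filter.Tendsto (fun n => Ddet s γ 0 n / ∏ l ∈ Finset.range (n + 1), s l * (G l) ^ 2)
      Filter.atTop (nhds (1 / L)) := by
  have hd : ∀ k j, k < j → 0 < dd γ k j := by
    intro k j hkj
    have h := hγ k j hkj
    have h1 : 0 < 1 - ‖γ k j‖ ^ 2 := by nlinarith [norm_nonneg (γ k j)]
    exact Real.sqrt_pos.mpr h1
  have key : ∀ n, ∀ k ≤ n,
      (G k) ^ 2 = (∏ j ∈ Finset.Ioc k n, (dd γ k j) ^ 2) * Lfun n k := by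
    intro n k hkn
    have h1 : Tendsto (fun m => ∏ j ∈ Finset.Ioc k m, (dd γ k j) ^ 2) atTop
        (nhds ((G k) ^ 2)) := by
      have h2 := ((hG k).pow 2).comp (tendsto_sub_atTop_nat k)
      apply h2.congr'
      filter_upwards [eventually_ge_atTop k] with m hm
      simp only [Function.comp]
      rw [← Finset.prod_pow]
      rw [show Finset.Ioc k m = Finset.map (addLeftEmbedding k) (Finset.Icc 1 (m - k)) by
        rw [Finset.map_add_left_Icc, ← Finset.Icc_add_one_left_eq_Ioc]
        congr 1
        omega]
      rw [Finset.prod_map]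
      rfl
    have h3 : Tendsto (fun m => ∏ j ∈ Finset.Ioc k m, (dd γ k j) ^ 2) atTop
        (nhds ((∏ j ∈ Finset.Ioc k n, (dd γ k j) ^ 2) * Lfun n k)) := by
      have h4 := (hLfun n k hkn).const_mul (∏ j ∈ Finset.Ioc k n, (dd γ k j) ^ 2)
      apply h4.congr'
      filter_upwards [eventually_ge_atTop n] with m hm
      rw [Finset.Icc_add_one_left_eq_Ioc, Finset.prod_Ioc_consecutive _ hkn hm]
    exact tendsto_nhds_unique h1 h3
  have heq : ∀ n, Ddet s γ 0 n / ∏ l ∈ Finset.range (n + 1), s l * (G l) ^ 2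
      = (∏ k ∈ Finset.range (n + 1), Lfun n k)⁻¹ := by
    intro n
    have hr : Finset.range (n + 1) = Finset.Icc 0 n := by
      rw [Finset.range_eq_Ico, Finset.Ico_add_one_right_eq_Icc]
    have hG2 : ∏ k ∈ Finset.Icc 0 n, (G k) ^ 2
        = (∏ k ∈ Finset.Icc 0 n, ∏ j ∈ Finset.Icc (k + 1) n, (dd γ k j) ^ 2) *
          ∏ k ∈ Finset.Icc 0 n, Lfun n k := by
      rw [← Finset.prod_mul_distrib]
      apply Finset.prod_congr rfl
      intro k hk
      rw [Finset.Icc_add_one_left_eq_Ioc]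
      exact key n k (Finset.mem_Icc.mp hk).2
    have hSne : (∏ k ∈ Finset.Icc 0 n, s k) ≠ 0 :=
      (Finset.prod_pos (fun k _ => hs k)).ne'
    have hPne : (∏ k ∈ Finset.Icc 0 n, ∏ j ∈ Finset.Icc (k + 1) n, (dd γ k j) ^ 2) ≠ 0 := by
      refine (Finset.prod_pos (fun k _ => Finset.prod_pos (fun j hj => ?_))).ne'
      exact pow_pos (hd k j (by have := (Finset.mem_Icc.mp hj).1; omega)) 2
    rw [Ddet, hr, Finset.prod_mul_distrib, hG2, ← mul_assoc,
      div_mul_eq_div_div, div_self (mul_ne_zero hSne hPne), one_div]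
  have hfin : Tendsto (fun n => (∏ k ∈ Finset.range (n + 1), Lfun n k)⁻¹) atTop
      (nhds L⁻¹) := hL.inv₀ hLpos.ne'
  rw [one_div]
  exact hfin.congr (fun n => (heq n).symm)
end

section
/- For every n ≥ 1, the determinant of the (n+1)×(n+1) Hilbert matrix satisfies det [1/(i+j+1)]_{0 ≤ i,j ≤ n} = (∏_{k=1}^{n+1} 1/(2k−1)) · ∏_{l=0}^{n−1} ∏_{k=1}^{n−l} (k/(k+2l+1))². -/
open Finset

section HilbertAux
open Matrix

lemma cauchy_step (m : ℕ) (x y : Fin (m+1) → ℝ) (h : ∀ i j, x i + y j ≠ 0) :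
    Matrix.det (Matrix.of fun i j => 1/(x i + y j)) =
      (∏ i, 1/(x i + y (Fin.last m))) *
      ((∏ i : Fin m, (x (Fin.last m) - x i.castSucc)) *
       ((∏ j : Fin m, (y (Fin.last m) - y j.castSucc)/(x (Fin.last m) + y j.castSucc)) *
        Matrix.det (Matrix.of fun i j : Fin m => 1/(x i.castSucc + y j.castSucc)))) := by
  set lst := Fin.last m with hlst
  set M : Matrix (Fin (m+1)) (Fin (m+1)) ℝ := Matrix.of fun i j => 1/(x i + y j) with hM
  set P : Matrix (Fin (m+1)) (Fin (m+1)) ℝ :=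
    Matrix.of (fun i j => if j = lst then 1 else (y lst - y j)/(x i + y j)) with hP
  set N : Matrix (Fin (m+1)) (Fin (m+1)) ℝ :=
    Matrix.of (fun i j => (1/(x i + y lst)) * P i j) with hN
  have h1 : M.det = N.det := by
    rw [← Matrix.det_transpose M, ← Matrix.det_transpose N]
    apply Matrix.det_eq_of_forall_row_eq_smul_add_const
      (fun j => if j = lst then 0 else 1) lst (if_pos rfl)
    intro j i
    simp only [Matrix.transpose_apply, hM, hN, hP, Matrix.of_apply]
    by_cases hj : j = lst
    · simp [hj]
    · simp only [if_neg hj, if_true]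
      have d1 := h i j
      have d2 := h i lst
      field_simp
      ring_nf
  have h2 : N.det = (∏ i, 1/(x i + y lst)) * P.det := by
    rw [hN]
    exact Matrix.det_mul_column _ _
  set Q : Matrix (Fin (m+1)) (Fin (m+1)) ℝ :=
    Matrix.of (fun i j => if i = lst then P i j else P i j - P lst j) with hQ
  have h3 : P.det = Q.det := by
    apply Matrix.det_eq_of_forall_row_eq_smul_add_const
      (fun i => if i = lst then 0 else 1) lst (if_pos rfl)
    intro i j
    simp only [hQ, Matrix.of_apply]
    by_cases hi : i = lst
    · simp [hi]
    · simp only [if_neg hi, if_true]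
      ring
  set R : Matrix (Fin m) (Fin m) ℝ :=
    Matrix.of (fun i j : Fin m => Q i.castSucc j.castSucc) with hR
  have h4 : Q.det = R.det := by
    rw [Matrix.det_succ_column Q lst]
    rw [Finset.sum_eq_single lst]
    · have hsign : (-1 : ℝ) ^ ((lst : ℕ) + (lst : ℕ)) = 1 := by
        rw [← two_mul, pow_mul]; norm_num
      rw [hsign, show Q lst lst = 1 by simp [hQ, hP], Fin.succAbove_last]
      rw [one_mul, one_mul]
      rfl
    · intro i _ hi
      have : Q i lst = 0 := by
        simp only [hQ, Matrix.of_apply, if_neg hi, hP, Matrix.of_apply, if_pos rfl]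
        ring
      simp [this]
    · simp
  have h5 : R.det =
      (∏ i : Fin m, (x lst - x i.castSucc)) *
      ((∏ j : Fin m, (y lst - y j.castSucc)/(x lst + y j.castSucc)) *
       Matrix.det (Matrix.of fun i j : Fin m => 1/(x i.castSucc + y j.castSucc))) := by
    have hRe : R = Matrix.of (fun i j : Fin m => (x lst - x i.castSucc) *
        (Matrix.of (fun i j : Fin m => ((y lst - y j.castSucc)/(x lst + y j.castSucc)) *
          (Matrix.of (fun i j : Fin m => 1/(x i.castSucc + y j.castSucc)) i j)) i j)) := by
      ext i j
      have hj : (j.castSucc : Fin (m+1)) ≠ lst := (Fin.castSucc_lt_last j).ne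
      have hi : (i.castSucc : Fin (m+1)) ≠ lst := (Fin.castSucc_lt_last i).ne
      simp only [hR, hQ, hP, Matrix.of_apply, if_neg hi, if_neg hj]
      have d1 := h i.castSucc j.castSucc
      have d2 := h lst j.castSucc
      field_simp
      ring
    rw [hRe, Matrix.det_mul_column]
    congr 1
    exact Matrix.det_mul_row _ _
  rw [h1, h2, h3, h4, h5]

lemma hilbert_step (n : ℕ) :
    Matrix.det (Matrix.of fun i j : Fin (n+2) => (1:ℝ)/((i:ℕ)+(j:ℕ)+1)) =
      (∏ i ∈ range (n+2), 1/((i:ℝ)+(n:ℝ)+2)) *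
      ((∏ i ∈ range (n+1), ((n:ℝ)+1-(i:ℝ))) *
       ((∏ j ∈ range (n+1), ((n:ℝ)+1-(j:ℝ))/((n:ℝ)+(j:ℝ)+2)) *
        Matrix.det (Matrix.of fun i j : Fin (n+1) => (1:ℝ)/((i:ℕ)+(j:ℕ)+1)))) := by
  have key := cauchy_step (n+1) (fun i => ((i:ℕ):ℝ)) (fun j => ((j:ℕ):ℝ)+1)
    (by intro i j; positivity)
  have hM : (Matrix.of fun i j : Fin (n+2) => (1:ℝ)/((i:ℕ)+(j:ℕ)+1)) =
      Matrix.of fun i j : Fin (n+2) => 1/(((i:ℕ):ℝ) + (((j:ℕ):ℝ)+1)) := by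
    ext i j
    simp [add_assoc]
  have hS : (Matrix.of fun i j : Fin (n+1) =>
        (1:ℝ)/(((i.castSucc:ℕ):ℝ) + (((j.castSucc:ℕ):ℝ)+1))) =
      Matrix.of fun i j : Fin (n+1) => (1:ℝ)/((i:ℕ)+(j:ℕ)+1) := by
    ext i j
    simp [Fin.coe_castSucc, add_assoc]
  rw [hM, key, ← hS]
  have e1 : (∏ x : Fin (n+1+1), 1 / (((x:ℕ):ℝ) + ((((Fin.last (n+1) : Fin (n+2)):ℕ):ℝ) + 1)))
      = ∏ i ∈ range (n+2), 1/((i:ℝ)+(n:ℝ)+2) := by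
    rw [← Fin.prod_univ_eq_prod_range (fun i => 1/((i:ℝ)+(n:ℝ)+2)) (n+2)]
    apply Finset.prod_congr rfl
    intro i _
    simp only [Fin.val_last]
    push_cast
    ring_nf
  have e2 : (∏ x : Fin (n+1), ((((Fin.last (n+1) : Fin (n+2)):ℕ):ℝ) - ((x.castSucc : Fin (n+2)):ℕ)))
      = ∏ i ∈ range (n+1), ((n:ℝ)+1-(i:ℝ)) := by
    rw [← Fin.prod_univ_eq_prod_range (fun i => ((n:ℝ)+1-(i:ℝ))) (n+1)]
    apply Finset.prod_congr rfl
    intro i _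
    simp only [Fin.val_last, Fin.coe_castSucc]
    push_cast
    ring_nf
  have e3 : (∏ x : Fin (n+1),
        ((((Fin.last (n+1) : Fin (n+2)):ℕ):ℝ) + 1 - ((((x.castSucc : Fin (n+2)):ℕ):ℝ) + 1)) /
        ((((Fin.last (n+1) : Fin (n+2)):ℕ):ℝ) + ((((x.castSucc : Fin (n+2)):ℕ):ℝ) + 1)))
      = ∏ j ∈ range (n+1), ((n:ℝ)+1-(j:ℝ))/((n:ℝ)+(j:ℝ)+2) := by
    rw [← Fin.prod_univ_eq_prod_range (fun j => ((n:ℝ)+1-(j:ℝ))/((n:ℝ)+(j:ℝ)+2)) (n+1)]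
    apply Finset.prod_congr rfl
    intro j _
    simp only [Fin.val_last, Fin.coe_castSucc]
    push_cast
    ring_nf
  rw [e1, e2, e3]

lemma Bstep (n : ℕ) :
    (∏ l ∈ range (n+1), ∏ k ∈ Icc 1 (n+1-l), ((k:ℝ)/((k:ℝ)+2*(l:ℝ)+1))^2)
    = (∏ l ∈ range n, ∏ k ∈ Icc 1 (n-l), ((k:ℝ)/((k:ℝ)+2*(l:ℝ)+1))^2)
      * ∏ l ∈ range (n+1), (((n:ℝ)+1-(l:ℝ))/((n:ℝ)+(l:ℝ)+2))^2 := by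
  have h1 : ∀ l ∈ range (n+1),
      (∏ k ∈ Icc 1 (n+1-l), ((k:ℝ)/((k:ℝ)+2*(l:ℝ)+1))^2)
      = (∏ k ∈ Icc 1 (n-l), ((k:ℝ)/((k:ℝ)+2*(l:ℝ)+1))^2)
        * (((n:ℝ)+1-(l:ℝ))/((n:ℝ)+(l:ℝ)+2))^2 := by
    intro l hl
    have hln : l ≤ n := Nat.lt_succ_iff.mp (mem_range.mp hl)
    have h2 : n + 1 - l = (n - l) + 1 := by omega
    rw [h2, Finset.prod_Icc_succ_top (Nat.le_add_left 1 (n-l))]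
    congr 1
    have hc : ((n - l + 1 : ℕ):ℝ) = (n:ℝ)+1-(l:ℝ) := by
      push_cast [Nat.cast_sub hln]
      ring
    rw [hc]
    ring
  rw [Finset.prod_congr rfl h1, Finset.prod_mul_distrib, Finset.prod_range_succ]
  have : (∏ k ∈ Icc 1 (n-n), ((k:ℝ)/((k:ℝ)+2*(n:ℝ)+1))^2) = 1 := by
    simp [Nat.sub_self]
  rw [this, mul_one]

lemma hilbert_aux (n : ℕ) :
    Matrix.det (Matrix.of fun i j : Fin (n + 1) => (1 : ℝ) / ((i : ℕ) + (j : ℕ) + 1)) =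
      (∏ k ∈ Finset.Icc 1 (n + 1), 1 / (2 * (k : ℝ) - 1)) *
        ∏ l ∈ Finset.range n, ∏ k ∈ Finset.Icc 1 (n - l),
          ((k : ℝ) / ((k : ℝ) + 2 * (l : ℝ) + 1)) ^ 2 := by
  induction n with
  | zero =>
      rw [Matrix.det_fin_one]
      norm_num
  | succ n ih =>
      rw [hilbert_step n, ih]
      rw [Finset.prod_Icc_succ_top (show 1 ≤ n+1+1 by omega) (fun k => 1/(2*(k:ℝ)-1))]
      rw [Bstep n]
      rw [Finset.prod_range_succ (fun i => 1/((i:ℝ)+(n:ℝ)+2))]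
      have hT : (∏ i ∈ range (n+1), 1/((i:ℝ)+(n:ℝ)+2)) *
          ((∏ i ∈ range (n+1), ((n:ℝ)+1-(i:ℝ))) *
           (∏ j ∈ range (n+1), ((n:ℝ)+1-(j:ℝ))/((n:ℝ)+(j:ℝ)+2)))
          = ∏ l ∈ range (n+1), (((n:ℝ)+1-(l:ℝ))/((n:ℝ)+(l:ℝ)+2))^2 := by
        rw [← Finset.prod_mul_distrib, ← Finset.prod_mul_distrib]
        exact Finset.prod_congr rfl (fun l _ => by ring)
      rw [← hT]
      push_cast
      ring


end HilbertAux

/-- For every `n ≥ 1`, the determinant of the `(n+1) × (n+1)` Hilbert matrix satisfies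
`det [1/(i+j+1)] = (∏_{k=1}^{n+1} 1/(2k-1)) ∏_{l=0}^{n-1} ∏_{k=1}^{n-l} (k/(k+2l+1))²`. -/
theorem hilbert_matrix_det (n : ℕ) (hn : 1 ≤ n) :
    Matrix.det (Matrix.of fun i j : Fin (n + 1) => (1 : ℝ) / ((i : ℕ) + (j : ℕ) + 1)) =
      (∏ k ∈ Finset.Icc 1 (n + 1), 1 / (2 * (k : ℝ) - 1)) *
        ∏ l ∈ Finset.range n, ∏ k ∈ Finset.Icc 1 (n - l),
          ((k : ℝ) / ((k : ℝ) + 2 * (l : ℝ) + 1)) ^ 2 :=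
  hilbert_aux n
end
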